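/- For S ⊆ ℝ^m define Sign(S) := ⋃_{a ∈ S} sign(A_a) ⊆ {+,0,−}^m, and for T ⊆ {+,0,−}^m define Face(T) := {a ∈ ℝ^m : T ⊆ sign(A_a)}. Then for every nonempty subset S ⊆ ℝ^m, Face(Sign(S)) = S holds if and only if S is an open face of the derived arrangement δA_o, i.e. there exists a ∈ ℝ^m such that S = {b ∈ ℝ^m : for every circuit vector c, ⟨c,b⟩ and ⟨c,a⟩ have the same sign (both zero, both positive, or both negative)}. -/

import Mathlib

open RealInnerProductSpace

noncomputable section

/-- `ℝ^n` with the Euclidean inner product. -/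
abbrev Euc (n : ℕ) := EuclideanSpace ℝ (Fin n)

/-- Standard scalar product on `ℝ^m` (as tuples). -/
def dotm {m : ℕ} (c a : Fin m → ℝ) : ℝ := ∑ i, c i * a i

/-- `C` is a circuit: the family `{u i : i ∈ C}` is linearly dependent but every proper
subfamily is linearly independent. -/
def IsCircuit {n m : ℕ} (u : Fin m → Euc n) (C : Set (Fin m)) : Prop :=
  ¬ LinearIndependent ℝ (fun i : C => u i) ∧
    ∀ D : Set (Fin m), D ⊂ C → LinearIndependent ℝ (fun i : D => u i)

/-- `c` is a circuit vector: `∑ i, c i • u i = 0` and the support of `c` is a circuit. -/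
def IsCircuitVector {n m : ℕ} (u : Fin m → Euc n) (c : Fin m → ℝ) : Prop :=
  (∑ i, c i • u i) = 0 ∧ IsCircuit u {i | c i ≠ 0}

/-- `a` and `b` lie in the same open face of the derived arrangement `δA_o`:
for every circuit vector `c`, `⟨c,a⟩` and `⟨c,b⟩` have the same sign. -/
def SameOpenFace {n m : ℕ} (u : Fin m → Euc n) (a b : Fin m → ℝ) : Prop :=
  ∀ c : Fin m → ℝ, IsCircuitVector u c →
    SignType.sign (dotm c a) = SignType.sign (dotm c b)

/-- `I, J, K` is a partition of `{1,…,m}` into pairwise disjoint (possibly empty) sets. -/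
def IsTripartition {m : ℕ} (I J K : Set (Fin m)) : Prop :=
  I ∪ J ∪ K = Set.univ ∧ Disjoint I J ∧ Disjoint I K ∧ Disjoint J K

/-- The convex polyhedron `P(a,I,J,K)`. -/
def poly {n m : ℕ} (u : Fin m → Euc n) (a : Fin m → ℝ) (I J K : Set (Fin m)) :
    Set (Euc n) :=
  {x | (∀ i ∈ I, ⟪u i, x⟫ = a i) ∧ (∀ j ∈ J, ⟪u j, x⟫ ≤ a j) ∧ (∀ k ∈ K, a k ≤ ⟪u k, x⟫)}

/-- The normal cone of `P` at `x`. -/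
def normalCone {n : ℕ} (P : Set (Euc n)) (x : Euc n) : Set (Euc n) :=
  {v | ∀ y ∈ P, ⟪v, y⟫ ≤ ⟪v, x⟫}

/-- The normal fan of `P`: the family of normal cones at points of `P`. -/
def normalFan {n : ℕ} (P : Set (Euc n)) : Set (Set (Euc n)) :=
  {N | ∃ x ∈ P, N = normalCone P x}

/-- A face of a convex polyhedron: the empty set or an exposed face. -/
def IsFace {n : ℕ} (P F : Set (Euc n)) : Prop :=
  F = ∅ ∨ ∃ v : Euc n, F = {x ∈ P | ∀ y ∈ P, ⟪v, y⟫ ≤ ⟪v, x⟫}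

/-- The set of sign vectors of the parallel translation `A_a`. -/
def signSet {n m : ℕ} (u : Fin m → Euc n) (a : Fin m → ℝ) : Set (Fin m → SignType) :=
  {s | ∃ x : Euc n, ∀ i, s i = SignType.sign (⟪u i, x⟫ - a i)}

/-- The sign operator: the union of the sign sets of `A_a` over `a ∈ S`. -/
def SignOp {n m : ℕ} (u : Fin m → Euc n) (S : Set (Fin m → ℝ)) :
    Set (Fin m → SignType) :=
  ⋃ a ∈ S, signSet u a

/-- The face operator. -/
def FaceOp {n m : ℕ} (u : Fin m → Euc n) (T : Set (Fin m → SignType)) :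
    Set (Fin m → ℝ) :=
  {a | T ⊆ signSet u a}

namespace Helpers

variable {n m : ℕ}

/-- A circuit vector is nonzero. -/
lemma circuitVector_exists_ne {u : Fin m → Euc n} {c : Fin m → ℝ}
    (hc : IsCircuitVector u c) : ∃ i, c i ≠ 0 := by
  by_contra h
  push_neg at h
  have hemp : {i : Fin m | c i ≠ 0} = (∅ : Set (Fin m)) := by
    ext i; simp [h i]
  have := hc.2.1
  rw [hemp] at this
  exact this (linearIndependent_empty_type)

/-- surjectivity of the pairing map for linearly independent families. -/
lemma exists_inner_eq {ι : Type*} [Fintype ι] (w : ι → Euc n)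
    (hw : LinearIndependent ℝ w) (β : ι → ℝ) : ∃ y : Euc n, ∀ i, ⟪w i, y⟫ = β i := by
  classical
  let T : Euc n →ₗ[ℝ] EuclideanSpace ℝ ι :=
    { toFun := fun y => WithLp.toLp 2 (fun i => ⟪w i, y⟫)
      map_add' := by intro y z; ext i; simp [inner_add_right]
      map_smul' := by intro r y; ext i; simp [inner_smul_right] }
  have hrange : LinearMap.range T = ⊤ := by
    rw [← Submodule.orthogonal_eq_bot_iff]
    rw [Submodule.eq_bot_iff]
    intro g hg
    have hg' : ∀ y : Euc n, ⟪(T y : EuclideanSpace ℝ ι), g⟫ = 0 := by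
      intro y
      have := (Submodule.mem_orthogonal _ g).1 hg (T y) (LinearMap.mem_range_self T y)
      exact this
    have key : ∀ y : Euc n, ⟪(∑ i, g i • w i), y⟫ = 0 := by
      intro y
      have h1 : ⟪(T y : EuclideanSpace ℝ ι), g⟫ = ∑ i, ⟪w i, y⟫ * g i := by
        simp [T, PiLp.inner_apply, RCLike.inner_apply, map_sum]
        exact Finset.sum_congr rfl fun _ _ => mul_comm _ _
      have h2 : ⟪(∑ i, g i • w i), y⟫ = ∑ i, ⟪w i, y⟫ * g i := by
        rw [sum_inner]
        congr 1; ext i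
        rw [real_inner_smul_left]; ring
      rw [h2, ← h1, hg' y]
    have : (∑ i, g i • w i) = 0 := by
      have := key (∑ i, g i • w i)
      exact inner_self_eq_zero.1 this
    have hz := Fintype.linearIndependent_iff.1 hw g this
    ext i; exact hz i
  have hsurj : Function.Surjective T := by
    rw [← LinearMap.range_eq_top]; exact hrange
  obtain ⟨y, hy⟩ := hsurj (WithLp.toLp 2 β)
  exact ⟨y, fun i => by have := congrArg (fun z => z i) hy; exact this⟩

/-- Solvability of equations on a circuit. -/
lemma circuit_solvable {u : Fin m → Euc n} {c : Fin m → ℝ}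
    (hc : IsCircuitVector u c) {β : Fin m → ℝ} (hβ : ∑ i, c i * β i = 0) :
    ∃ y : Euc n, ∀ i, c i ≠ 0 → ⟪u i, y⟫ = β i := by
  classical
  obtain ⟨j, hj⟩ := circuitVector_exists_ne hc
  set D : Set (Fin m) := {i | c i ≠ 0} \ {j} with hD
  have hDsub : D ⊂ {i | c i ≠ 0} := by
    constructor
    · exact Set.diff_subset
    · intro hsub
      have : j ∈ D := hsub hj
      simp [hD] at this
  have hli : LinearIndependent ℝ (fun i : D => u i) := hc.2.2 D hDsub
  haveI : Fintype D := Fintype.ofFinite _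
  obtain ⟨y, hy⟩ := exists_inner_eq (fun i : D => u i) hli (fun i => β i)
  refine ⟨y, ?_⟩
  have hyD : ∀ i, c i ≠ 0 → i ≠ j → ⟪u i, y⟫ = β i := by
    intro i hci hij
    exact hy ⟨i, ⟨hci, hij⟩⟩
  have hker : ∑ i, c i * ⟪u i, y⟫ = 0 := by
    have h0 : ⟪(∑ i, c i • u i), y⟫ = 0 := by rw [hc.1, inner_zero_left]
    rw [sum_inner] at h0
    rw [← h0]
    congr 1; ext i; rw [real_inner_smul_left]
  -- all terms except j agree with c i * β i
  have hterm : ∀ i ∈ Finset.univ.erase j, c i * ⟪u i, y⟫ = c i * β i := by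
    intro i hi
    rcases eq_or_ne (c i) 0 with h | h
    · simp [h]
    · rw [hyD i h (Finset.ne_of_mem_erase hi)]
  have hsum1 : ∑ i ∈ Finset.univ.erase j, c i * ⟪u i, y⟫
      = ∑ i ∈ Finset.univ.erase j, c i * β i := Finset.sum_congr rfl hterm
  have e1 : c j * ⟪u j, y⟫ + ∑ i ∈ Finset.univ.erase j, c i * ⟪u i, y⟫ = 0 :=
    (Finset.add_sum_erase _ (fun i => c i * ⟪u i, y⟫) (Finset.mem_univ j)).trans hker
  have e2 : c j * β j + ∑ i ∈ Finset.univ.erase j, c i * β i = 0 :=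
    (Finset.add_sum_erase _ (fun i => c i * β i) (Finset.mem_univ j)).trans hβ
  have : c j * ⟪u j, y⟫ = c j * β j := by
    rw [hsum1] at e1; linarith
  have hjy : ⟪u j, y⟫ = β j := by
    exact mul_left_cancel₀ hj this
  intro i hci
  rcases eq_or_ne i j with rfl | hij
  · exact hjy
  · exact hyD i hci hij

lemma mul_pos_trans {x y z : ℝ} (h1 : 0 < x * y) (h2 : 0 < y * z) : 0 < x * z := by
  have hy : y ≠ 0 := by rintro rfl; simp at h1
  nlinarith [mul_self_pos.2 hy, mul_pos h1 h2]

lemma mul_nonneg_trans {x y z : ℝ} (h1 : 0 < x * y) (h2 : 0 ≤ x * z) : 0 ≤ y * z := by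
  have hx : x ≠ 0 := by rintro rfl; simp at h1
  nlinarith [mul_self_pos.2 hx, mul_nonneg (le_of_lt h1) h2]

lemma sum_subtype_eq_sum_univ {M : Type*} [AddCommMonoid M] (S : Set (Fin m)) [Fintype ↥S]
    (f : Fin m → M) (hf : ∀ i, i ∉ S → f i = 0) : ∑ i : ↥S, f ↑i = ∑ i, f i := by
  classical
  have h1 : ∑ i ∈ Finset.univ.filter (· ∈ S), f i = ∑ i : ↥S, f ↑i :=
    Finset.sum_subtype _ (by simp) f
  rw [← h1]
  apply Finset.sum_subset (Finset.filter_subset _ _)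
  intro x _ hx
  simp only [Finset.mem_filter, Finset.mem_univ, true_and] at hx
  exact hf x hx

lemma neg_circuitVector {u : Fin m → Euc n} {d : Fin m → ℝ} (hd : IsCircuitVector u d) :
    IsCircuitVector u (-d) := by
  refine ⟨?_, ?_⟩
  · have : ∑ i, (-d) i • u i = -∑ i, d i • u i := by
      rw [← Finset.sum_neg_distrib]; congr 1; ext i; simp [neg_smul]
    rw [this, hd.1, neg_zero]
  · have hset : {i : Fin m | (-d) i ≠ 0} = {i | d i ≠ 0} := by ext i; simp
    rw [hset]; exact hd.2

/-- the reduction step `c ↦ c - t d`. -/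
lemma reduce_step (u : Fin m → Euc n) {c d : Fin m → ℝ}
    (hcker : ∑ i, c i • u i = 0) (hdker : ∑ i, d i • u i = 0)
    (hsupp : ∀ i, d i ≠ 0 → c i ≠ 0) (hpos : ∃ i, d i ≠ 0 ∧ 0 < c i * d i) :
    ∃ t : ℝ, 0 < t ∧ (∑ i, (c i - t * d i) • u i = 0) ∧
      (∀ i, c i - t * d i ≠ 0 → 0 < c i * (c i - t * d i)) ∧
      (∃ i, c i ≠ 0 ∧ c i - t * d i = 0) ∧
      (∀ i, c i = 0 → c i - t * d i = 0) ∧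
      (∀ i, c i * d i < 0 → 0 < c i * (c i - t * d i)) := by
  classical
  set posF : Finset (Fin m) := Finset.univ.filter (fun i => d i ≠ 0 ∧ 0 < c i * d i)
    with hposF
  have hne : posF.Nonempty := by
    obtain ⟨i, hi1, hi2⟩ := hpos
    exact ⟨i, by simp [hposF, hi1, hi2]⟩
  obtain ⟨i0, hi0mem, hi0min⟩ := Finset.exists_min_image posF (fun i => c i / d i) hne
  have hi0 : d i0 ≠ 0 ∧ 0 < c i0 * d i0 := by
    simpa [hposF] using hi0mem
  set t := c i0 / d i0 with ht
  have ht0 : 0 < t := by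
    rw [ht, ← mul_div_mul_right (c i0) (d i0) hi0.1]
    exact div_pos hi0.2 (mul_self_pos.2 hi0.1)
  have hmin : ∀ i, d i ≠ 0 → 0 < c i * d i → t * (c i * d i) ≤ c i * c i := by
    intro i hdi hcdi
    have hle : t ≤ c i / d i := hi0min i (by simp [hposF, hdi, hcdi])
    have := mul_le_mul_of_nonneg_right hle (le_of_lt hcdi)
    calc t * (c i * d i) ≤ (c i / d i) * (c i * d i) := this
      _ = c i * c i := by field_simp
  have hconf : ∀ i, c i - t * d i ≠ 0 → 0 < c i * (c i - t * d i) := by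
    intro i hci'
    rcases eq_or_ne (d i) 0 with hdi | hdi
    · have : c i - t * d i = c i := by rw [hdi]; ring
      rw [this]
      rw [this] at hci'
      exact mul_self_pos.2 hci'
    · have hci : c i ≠ 0 := hsupp i hdi
      rcases lt_trichotomy (c i * d i) 0 with hlt | heq | hgt
      · nlinarith [mul_self_pos.2 hci]
      · exact absurd heq (mul_ne_zero hci hdi)
      · have := hmin i hdi hgt
        have h2 : 0 ≤ c i * (c i - t * d i) := by nlinarith
        rcases h2.lt_or_eq with h | h
        · exact h
        · exact absurd h.symm (mul_ne_zero hci hci')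
  refine ⟨t, ht0, ?_, hconf, ⟨i0, hsupp i0 hi0.1, ?_⟩, ?_, ?_⟩
  · have : ∀ i ∈ Finset.univ, (c i - t * d i) • u i = c i • u i - t • (d i • u i) := by
      intro i _; rw [sub_smul, smul_smul]
    rw [Finset.sum_congr rfl this, Finset.sum_sub_distrib, ← Finset.smul_sum, hcker, hdker,
      smul_zero, sub_zero]
  · rw [ht, div_mul_cancel₀ _ hi0.1, sub_self]
  · intro i hci
    have hdi : d i = 0 := by
      by_contra hdi
      exact hsupp i hdi hci
    rw [hci, hdi]; ring
  · intro i hlt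
    have hci : c i ≠ 0 := by rintro h; rw [h] at hlt; simp at hlt
    nlinarith [mul_self_pos.2 hci]

open scoped Classical in
lemma exists_conformal_circuit (u : Fin m → Euc n) :
    ∀ N : ℕ, ∀ c : Fin m → ℝ, (Finset.univ.filter (fun i => c i ≠ 0)).card ≤ N →
      (∃ i, c i ≠ 0) → (∑ i, c i • u i = 0) →
      ∃ d, IsCircuitVector u d ∧ (∀ i, d i ≠ 0 → c i ≠ 0) ∧
        (∀ i, d i ≠ 0 → 0 < c i * d i) := by
  intro N
  induction N with
  | zero =>
    intro c hcard hne _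
    obtain ⟨i, hi⟩ := hne
    exfalso
    have : i ∈ Finset.univ.filter (fun i => c i ≠ 0) := by simp [hi]
    have := Finset.card_pos.2 ⟨i, this⟩
    omega
  | succ N ih =>
    intro c hcard hne hker
    -- minimal support kernel vector inside supp c
    have hP : ∃ k, ∃ d : Fin m → ℝ, (∃ i, d i ≠ 0) ∧ (∑ i, d i • u i = 0) ∧
        (∀ i, d i ≠ 0 → c i ≠ 0) ∧ (Finset.univ.filter (fun i => d i ≠ 0)).card = k :=
      ⟨_, c, hne, hker, fun _ h => h, rfl⟩
    set k0 := Nat.find hP with hk0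
    obtain ⟨d, hdne, hdker, hdsupp, hdcard⟩ := Nat.find_spec hP
    -- d is a circuit vector
    have hdcirc : IsCircuitVector u d := by
      refine ⟨hdker, ?_, ?_⟩
      · -- dependent
        intro hli
        haveI : Fintype ↥{i : Fin m | d i ≠ 0} := Fintype.ofFinite _
        have hsum : ∑ i : ↥{i : Fin m | d i ≠ 0}, d ↑i • u ↑i = 0 := by
          rw [sum_subtype_eq_sum_univ {i : Fin m | d i ≠ 0} (fun i => d i • u i)
            (fun i hi => by simp only [Set.mem_setOf_eq, not_not] at hi; simp [hi])]
          exact hdker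
        have := Fintype.linearIndependent_iff.1 hli (fun i => d ↑i) hsum
        obtain ⟨i, hi⟩ := hdne
        exact hi (this ⟨i, hi⟩)
      · -- proper subsets independent
        intro D hD
        by_contra hnli
        haveI : Fintype ↥D := Fintype.ofFinite _
        obtain ⟨g, hg0, i1, hgi1⟩ := Fintype.not_linearIndependent_iff.1 hnli
        set e : Fin m → ℝ := fun i => if h : i ∈ D then g ⟨i, h⟩ else 0 with he
        have heD : ∀ i (h : i ∈ D), e i = g ⟨i, h⟩ := by
          intro i h; simp [he, h]
        have heD' : ∀ i, i ∉ D → e i = 0 := by intro i h; simp [he, h]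
        have hene : ∃ i, e i ≠ 0 := by
          refine ⟨i1, ?_⟩
          rw [heD i1 i1.2]
          simpa using hgi1
        have heker : ∑ i, e i • u i = 0 := by
          rw [← sum_subtype_eq_sum_univ D (fun i => e i • u i)
            (fun i hi => by show e i • u i = 0; rw [heD' i hi, zero_smul])]
          rw [← hg0]
          apply Finset.sum_congr rfl
          intro i _
          rw [heD i i.2]
        have hesupp : ∀ i, e i ≠ 0 → c i ≠ 0 := by
          intro i hi
          have hiD : i ∈ D := by by_contra h; exact hi (heD' i h)
          exact hdsupp i (hD.subset hiD)
        obtain ⟨j, hjd, hjD⟩ := Set.exists_of_ssubset hD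
        have hsubsetF : Finset.univ.filter (fun i => e i ≠ 0) ⊆
            (Finset.univ.filter (fun i => d i ≠ 0)).erase j := by
          intro i hi
          simp only [Finset.mem_filter, Finset.mem_univ, true_and] at hi
          have hiD : i ∈ D := by by_contra h; exact hi (heD' i h)
          refine Finset.mem_erase.2 ⟨?_, by simpa using (hD.subset hiD : d i ≠ 0)⟩
          rintro rfl; exact hjD hiD
        have hcardlt : (Finset.univ.filter (fun i => e i ≠ 0)).card < k0 := by
          calc (Finset.univ.filter (fun i => e i ≠ 0)).card
              ≤ ((Finset.univ.filter (fun i => d i ≠ 0)).erase j).card :=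
                Finset.card_le_card hsubsetF
            _ < (Finset.univ.filter (fun i => d i ≠ 0)).card := by
                apply Finset.card_erase_lt_of_mem
                simpa using (hjd : d j ≠ 0)
            _ = k0 := hdcard
        exact Nat.find_min hP hcardlt ⟨e, hene, heker, hesupp, rfl⟩
    -- orientation
    obtain ⟨d₁, hd₁circ, hd₁supp, hd₁pos⟩ :
        ∃ d₁, IsCircuitVector u d₁ ∧ (∀ i, d₁ i ≠ 0 → c i ≠ 0) ∧
          (∃ i, d₁ i ≠ 0 ∧ 0 < c i * d₁ i) := by
      obtain ⟨i, hi⟩ := hdne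
      have hci : c i ≠ 0 := hdsupp i hi
      rcases lt_trichotomy (c i * d i) 0 with hlt | heq | hgt
      · refine ⟨-d, neg_circuitVector hdcirc, ?_, ⟨i, ?_, ?_⟩⟩
        · intro j hj; exact hdsupp j (by simpa using hj)
        · simpa using hi
        · simp only [Pi.neg_apply, mul_neg]; linarith
      · exact absurd heq (mul_ne_zero hci hi)
      · exact ⟨d, hdcirc, hdsupp, ⟨i, hi, hgt⟩⟩
    by_cases hful : ∀ i, d₁ i ≠ 0 → 0 < c i * d₁ i
    · exact ⟨d₁, hd₁circ, hd₁supp, hful⟩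
    · push_neg at hful
      obtain ⟨i1, hi1ne, hi1le⟩ := hful
      have hi1lt : c i1 * d₁ i1 < 0 :=
        lt_of_le_of_ne hi1le (mul_ne_zero (hd₁supp i1 hi1ne) hi1ne)
      obtain ⟨t, ht0, hker', hconf, ⟨istar, histar, histar0⟩, hzero, hneg⟩ :=
        reduce_step u hker hd₁circ.1 hd₁supp ⟨_, hd₁pos.choose_spec.1, hd₁pos.choose_spec.2⟩
      set c' : Fin m → ℝ := fun i => c i - t * d₁ i with hc'
      have hc'ne : ∃ i, c' i ≠ 0 := by
        refine ⟨i1, ?_⟩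
        have := hneg i1 hi1lt
        intro h
        rw [hc'] at h
        simp only at h
        rw [h] at this
        simp at this
      have hc'card : (Finset.univ.filter (fun i => c' i ≠ 0)).card ≤ N := by
        have hsub : Finset.univ.filter (fun i => c' i ≠ 0) ⊆
            (Finset.univ.filter (fun i => c i ≠ 0)).erase istar := by
          intro i hi
          simp only [Finset.mem_filter, Finset.mem_univ, true_and, hc'] at hi
          refine Finset.mem_erase.2 ⟨?_, ?_⟩
          · rintro rfl; exact hi histar0
          · simp only [Finset.mem_filter, Finset.mem_univ, true_and]
            intro h; exact hi (hzero i h)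
        calc (Finset.univ.filter (fun i => c' i ≠ 0)).card
            ≤ ((Finset.univ.filter (fun i => c i ≠ 0)).erase istar).card :=
              Finset.card_le_card hsub
          _ ≤ (Finset.univ.filter (fun i => c i ≠ 0)).card - 1 := by
              rw [Finset.card_erase_of_mem (by simp [histar])]
          _ ≤ N := by omega
      obtain ⟨e, hecirc, hesupp, heconf⟩ := ih c' hc'card hc'ne hker'
      refine ⟨e, hecirc, ?_, ?_⟩
      · intro i hi
        have h1 := heconf i hi
        have h2 := hconf i (hesupp i hi)
        intro h
        rw [h] at h2
        simp at h2
      · intro i hi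
        exact mul_pos_trans (hconf i (hesupp i hi)) (heconf i hi)

lemma lemB_circuit {u : Fin m → Euc n} {a b v : Fin m → ℝ} {x : Euc n}
    (hx : ∀ i, v i = ⟪u i, x⟫ - b i)
    (hsame : ∀ d, IsCircuitVector u d →
      SignType.sign (dotm d b) = SignType.sign (dotm d a))
    {d : Fin m → ℝ} (hd : IsCircuitVector u d) (hdv : ∀ i, 0 ≤ d i * v i) :
    dotm d a ≤ 0 ∧ ∀ i0, d i0 ≠ 0 → v i0 ≠ 0 → dotm d a < 0 := by
  have hsumv : ∑ i, d i * v i = - dotm d b := by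
    have h0 : ⟪(∑ i, d i • u i), x⟫ = 0 := by rw [hd.1, inner_zero_left]
    rw [sum_inner] at h0
    have h1 : ∑ i, d i * ⟪u i, x⟫ = 0 := by
      rw [← h0]; apply Finset.sum_congr rfl; intro i _; rw [real_inner_smul_left]
    have h2 : ∑ i, d i * v i = ∑ i, d i * ⟪u i, x⟫ - dotm d b := by
      rw [dotm, ← Finset.sum_sub_distrib]
      apply Finset.sum_congr rfl; intro i _; rw [hx i]; ring
    rw [h2, h1]; ring
  have hb : dotm d b ≤ 0 := by
    have := Finset.sum_nonneg (fun i (_ : i ∈ Finset.univ) => hdv i)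
    rw [hsumv] at this; linarith
  have hkey : dotm d a ≤ 0 ∧ (dotm d b < 0 → dotm d a < 0) := by
    rcases lt_or_eq_of_le hb with h | h
    · have hs : SignType.sign (dotm d a) = -1 := by
        rw [← hsame d hd]; exact sign_eq_neg_one_iff.2 h
      have := sign_eq_neg_one_iff.1 hs
      exact ⟨le_of_lt this, fun _ => this⟩
    · have hs : SignType.sign (dotm d a) = 0 := by
        rw [← hsame d hd, h, sign_zero]
      have := sign_eq_zero_iff.1 hs
      exact ⟨le_of_eq this, fun hlt => absurd h (ne_of_lt hlt)⟩
  refine ⟨hkey.1, fun i0 hd0 hv0 => ?_⟩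
  have hpos : 0 < ∑ i, d i * v i := by
    apply Finset.sum_pos' (fun i _ => hdv i)
    refine ⟨i0, Finset.mem_univ i0, ?_⟩
    exact lt_of_le_of_ne (hdv i0) (Ne.symm (mul_ne_zero hd0 hv0))
  apply hkey.2
  rw [hsumv] at hpos; linarith

lemma lemB {u : Fin m → Euc n} {a b v : Fin m → ℝ} {x : Euc n}
    (hx : ∀ i, v i = ⟪u i, x⟫ - b i)
    (hsame : ∀ d, IsCircuitVector u d →
      SignType.sign (dotm d b) = SignType.sign (dotm d a)) :
    ∀ N : ℕ, ∀ c : Fin m → ℝ,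
      (Finset.univ.filter (fun i => c i ≠ 0)).card ≤ N →
      (∑ i, c i • u i = 0) → (∀ i, 0 ≤ c i * v i) →
      dotm c a ≤ 0 ∧ ∀ i0, c i0 ≠ 0 → v i0 ≠ 0 → dotm c a < 0 := by
  classical
  intro N
  induction N with
  | zero =>
    intro c hcard hker hcv
    have hzero : ∀ i, c i = 0 := by
      intro i
      by_contra h
      have : i ∈ Finset.univ.filter (fun i => c i ≠ 0) := by simp [h]
      have := Finset.card_pos.2 ⟨i, this⟩
      omega
    constructor
    · have : dotm c a = 0 := by
        rw [dotm]; apply Finset.sum_eq_zero; intro i _; rw [hzero i]; ring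
      linarith
    · intro i0 h; exact absurd (hzero i0) h
  | succ N ih =>
    intro c hcard hker hcv
    by_cases hne : ∃ i, c i ≠ 0
    · obtain ⟨d, hdcirc, hdsupp, hdconf⟩ :=
        exists_conformal_circuit u (N + 1) c hcard hne hker
      have hdne := circuitVector_exists_ne hdcirc
      have hdv : ∀ i, 0 ≤ d i * v i := by
        intro i
        rcases eq_or_ne (d i) 0 with h | h
        · rw [h]; simp
        · exact mul_nonneg_trans (hdconf i h) (hcv i)
      have hda := lemB_circuit hx hsame hdcirc hdv
      obtain ⟨i', hi'⟩ := hdne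
      obtain ⟨t, ht0, hker', hconf, ⟨istar, histar, histar0⟩, hzero, _⟩ :=
        reduce_step u hker hdcirc.1 hdsupp ⟨i', hi', hdconf i' hi'⟩
      set c' : Fin m → ℝ := fun i => c i - t * d i with hc'
      have hc'v : ∀ i, 0 ≤ c' i * v i := by
        intro i
        rcases eq_or_ne (c' i) 0 with h | h
        · rw [h]; simp
        · exact mul_nonneg_trans (hconf i h) (hcv i)
      have hc'card : (Finset.univ.filter (fun i => c' i ≠ 0)).card ≤ N := by
        have hsub : Finset.univ.filter (fun i => c' i ≠ 0) ⊆
            (Finset.univ.filter (fun i => c i ≠ 0)).erase istar := by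
          intro i hi
          simp only [Finset.mem_filter, Finset.mem_univ, true_and, hc'] at hi
          refine Finset.mem_erase.2 ⟨?_, ?_⟩
          · rintro rfl; exact hi histar0
          · simp only [Finset.mem_filter, Finset.mem_univ, true_and]
            intro h; exact hi (hzero i h)
        calc (Finset.univ.filter (fun i => c' i ≠ 0)).card
            ≤ ((Finset.univ.filter (fun i => c i ≠ 0)).erase istar).card :=
              Finset.card_le_card hsub
          _ ≤ (Finset.univ.filter (fun i => c i ≠ 0)).card - 1 := by
              rw [Finset.card_erase_of_mem (by simp [histar])]
          _ ≤ N := by omega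
      have hIH := ih c' hc'card hker' hc'v
      have hsplit : dotm c a = dotm c' a + t * dotm d a := by
        simp only [dotm, hc']
        rw [Finset.mul_sum, ← Finset.sum_add_distrib]
        apply Finset.sum_congr rfl; intro i _; ring
      constructor
      · have h1 : t * dotm d a ≤ 0 :=
          mul_nonpos_of_nonneg_of_nonpos (le_of_lt ht0) hda.1
        linarith [hIH.1]
      · intro i0 hc0 hv0
        by_cases h : c' i0 = 0
        · have hd0 : d i0 ≠ 0 := by
            intro hd0
            apply hc0
            have : c i0 - t * d i0 = 0 := h
            rw [hd0] at this; linarith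
          have := hda.2 i0 hd0 hv0
          have h2 : t * dotm d a < 0 := mul_neg_of_pos_of_neg ht0 this
          linarith [hIH.1]
        · have := hIH.2 i0 h hv0
          have h1 : t * dotm d a ≤ 0 :=
            mul_nonpos_of_nonneg_of_nonpos (le_of_lt ht0) hda.1
          linarith
    · -- c = 0
      push_neg at hne
      constructor
      · have : dotm c a = 0 := by
          rw [dotm]; apply Finset.sum_eq_zero; intro i _; rw [hne i]; ring
        linarith
      · intro i0 h; exact absurd (hne i0) h

lemma mul_pos_of_sign_eq {x y : ℝ} (h : SignType.sign x = SignType.sign y) (hx : x ≠ 0) :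
    0 < x * y := by
  rcases lt_trichotomy x 0 with hlt | heq | hgt
  · have : SignType.sign y = -1 := by rw [← h]; exact sign_eq_neg_one_iff.2 hlt
    exact mul_pos_of_neg_of_neg hlt (sign_eq_neg_one_iff.1 this)
  · exact absurd heq hx
  · have : SignType.sign y = 1 := by rw [← h]; exact sign_eq_one_iff.2 hgt
    exact mul_pos hgt (sign_eq_one_iff.1 this)

lemma sum_mul_inner_sub {u : Fin m → Euc n} {c : Fin m → ℝ}
    (hker : ∑ i, c i • u i = 0) (a : Fin m → ℝ) (y : Euc n) :
    ∑ i, c i * (⟪u i, y⟫ - a i) = - dotm c a := by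
  have h0 : ⟪(∑ i, c i • u i), y⟫ = 0 := by rw [hker, inner_zero_left]
  rw [sum_inner] at h0
  have h1 : ∑ i, c i * ⟪u i, y⟫ = 0 := by
    rw [← h0]; apply Finset.sum_congr rfl; intro i _; rw [real_inner_smul_left]
  have h2 : ∑ i, c i * (⟪u i, y⟫ - a i) = ∑ i, c i * ⟪u i, y⟫ - dotm c a := by
    rw [dotm, ← Finset.sum_sub_distrib]
    apply Finset.sum_congr rfl; intro i _; ring
  rw [h2, h1]; ring

lemma same_of_subset {u : Fin m → Euc n} {a b : Fin m → ℝ}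
    (h : signSet u b ⊆ signSet u a) {c : Fin m → ℝ} (hc : IsCircuitVector u c) :
    SignType.sign (dotm c b) = SignType.sign (dotm c a) := by
  obtain ⟨i1, hi1⟩ := circuitVector_exists_ne hc
  rcases eq_or_ne (dotm c b) 0 with hβ | hβ
  · -- dotm c b = 0
    obtain ⟨y, hy⟩ := circuit_solvable hc (β := b) hβ
    have hs : (fun i => SignType.sign (⟪u i, y⟫ - b i)) ∈ signSet u b := ⟨y, fun i => rfl⟩
    obtain ⟨y', hy'⟩ := h hs
    have hz : ∀ i, c i ≠ 0 → ⟪u i, y'⟫ - a i = 0 := by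
      intro i hci
      have e : SignType.sign (⟪u i, y⟫ - b i) = SignType.sign (⟪u i, y'⟫ - a i) := hy' i
      have : SignType.sign (⟪u i, y'⟫ - a i) = 0 := by
        rw [← e, hy i hci, sub_self, sign_zero]
      exact sign_eq_zero_iff.1 this
    have hsum := sum_mul_inner_sub hc.1 a y'
    have : ∑ i, c i * (⟪u i, y'⟫ - a i) = 0 := by
      apply Finset.sum_eq_zero
      intro i _
      rcases eq_or_ne (c i) 0 with h0 | h0
      · rw [h0]; ring
      · rw [hz i h0]; ring
    rw [this] at hsum
    have : dotm c a = 0 := by linarith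
    rw [hβ, this]
  · -- dotm c b ≠ 0
    set Q : ℝ := ∑ i, c i * c i with hQ
    have hQpos : 0 < Q := by
      apply Finset.sum_pos' (fun i _ => mul_self_nonneg (c i))
      exact ⟨i1, Finset.mem_univ i1, mul_self_pos.2 hi1⟩
    set lam : ℝ := dotm c b / Q with hlam
    have hlamβ : lam * Q = dotm c b := div_mul_cancel₀ _ (ne_of_gt hQpos)
    have hlamne : lam ≠ 0 := by
      intro h0; rw [h0, zero_mul] at hlamβ; exact hβ hlamβ.symm
    have hsolv : ∑ i, c i * (b i - lam * c i) = 0 := by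
      have : ∑ i, c i * (b i - lam * c i) = dotm c b - lam * Q := by
        rw [dotm, hQ, Finset.mul_sum, ← Finset.sum_sub_distrib]
        apply Finset.sum_congr rfl; intro i _; ring
      rw [this, hlamβ]; ring
    obtain ⟨y, hy⟩ := circuit_solvable hc hsolv
    have hs : (fun i => SignType.sign (⟪u i, y⟫ - b i)) ∈ signSet u b := ⟨y, fun i => rfl⟩
    obtain ⟨y', hy'⟩ := h hs
    -- for c i ≠ 0 : sign (⟪u i, y'⟫ - a i) = sign (-lam * c i)
    have hterm : ∀ i, 0 ≤ (-lam) * (c i * (⟪u i, y'⟫ - a i)) := by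
      intro i
      rcases eq_or_ne (c i) 0 with h0 | h0
      · rw [h0]; simp
      · have e : SignType.sign (⟪u i, y⟫ - b i) = SignType.sign (⟪u i, y'⟫ - a i) := hy' i
        have hsgn0 : SignType.sign ((-lam) * c i) = SignType.sign (⟪u i, y⟫ - b i) := by
          rw [hy i h0]; congr 1; ring
        have hsgn := hsgn0.trans e
        have hne : (-lam) * c i ≠ 0 := mul_ne_zero (neg_ne_zero.2 hlamne) h0
        have := mul_pos_of_sign_eq hsgn hne
        nlinarith
    have hterm1 : 0 < (-lam) * (c i1 * (⟪u i1, y'⟫ - a i1)) := by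
      have e : SignType.sign (⟪u i1, y⟫ - b i1) = SignType.sign (⟪u i1, y'⟫ - a i1) := hy' i1
      have hsgn0 : SignType.sign ((-lam) * c i1) = SignType.sign (⟪u i1, y⟫ - b i1) := by
        rw [hy i1 hi1]; congr 1; ring
      have hsgn := hsgn0.trans e
      have hne : (-lam) * c i1 ≠ 0 := mul_ne_zero (neg_ne_zero.2 hlamne) hi1
      have := mul_pos_of_sign_eq hsgn hne
      nlinarith
    have hsumpos : 0 < ∑ i, (-lam) * (c i * (⟪u i, y'⟫ - a i)) :=
      Finset.sum_pos' (fun i _ => hterm i) ⟨i1, Finset.mem_univ i1, hterm1⟩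
    have hsum2 : ∑ i, (-lam) * (c i * (⟪u i, y'⟫ - a i)) = lam * dotm c a := by
      rw [← Finset.mul_sum, sum_mul_inner_sub hc.1 a y']; ring
    rw [hsum2] at hsumpos
    have hsb : 0 < lam * dotm c b := by
      have : lam * dotm c b = (dotm c b) * (dotm c b) / Q := by
        rw [hlam]; field_simp
      rw [this]
      exact div_pos (mul_self_pos.2 hβ) hQpos
    rcases lt_trichotomy lam 0 with hl | hl | hl
    · have h1 : dotm c b < 0 := by nlinarith
      have h2 : dotm c a < 0 := by nlinarith
      rw [sign_eq_neg_one_iff.2 h1, sign_eq_neg_one_iff.2 h2]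
    · exact absurd hl hlamne
    · have h1 : 0 < dotm c b := by nlinarith
      have h2 : 0 < dotm c a := by nlinarith
      rw [sign_eq_one_iff.2 h1, sign_eq_one_iff.2 h2]

lemma sign_eq_of_mul_pos {p q : ℝ} (h : 0 < p * q) :
    SignType.sign p = SignType.sign q := by
  rcases lt_trichotomy p 0 with hp | hp | hp
  · have hq : q < 0 := by nlinarith
    rw [sign_eq_neg_one_iff.2 hp, sign_eq_neg_one_iff.2 hq]
  · rw [hp] at h; simp at h
  · have hq : 0 < q := by nlinarith
    rw [sign_eq_one_iff.2 hp, sign_eq_one_iff.2 hq]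

lemma nonpos_of_forall_smul_lt {p q : ℝ} (h : ∀ l : ℝ, 0 < l → l * p < q) : p ≤ 0 := by
  by_contra hp
  push_neg at hp
  have hl : 0 < max 1 (q / p) := lt_of_lt_of_le one_pos (le_max_left _ _)
  have := h _ hl
  have h2 : q / p * p ≤ max 1 (q / p) * p :=
    mul_le_mul_of_nonneg_right (le_max_right _ _) (le_of_lt hp)
  rw [div_mul_cancel₀ _ (ne_of_gt hp)] at h2
  linarith

lemma eq_zero_of_forall_le_affine {r A B : ℝ} (h : ∀ t : ℝ, r ≤ A + t * B) : B = 0 := by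
  by_contra hB
  have h1 := h ((r - A - 1) / B)
  rw [div_mul_cancel₀ _ hB] at h1
  linarith

/-- Case 1 certificate: the equality system on `Z = {i | v i = 0}` for `a` is infeasible. -/
lemma cert_case1 {n m : ℕ} (u : Fin m → Euc n) (a v : Fin m → ℝ)
    (h1 : ¬ ∃ y : Euc n, ∀ i, v i = 0 → ⟪u i, y⟫ = a i) :
    ∃ d : Fin m → ℝ, (∑ i, d i • u i = 0) ∧ (∀ i, 0 ≤ d i * v i) ∧ 0 < dotm d a := by
  classical
  set F := EuclideanSpace ℝ (Fin m)
  let T : Euc n →ₗ[ℝ] F :=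
    { toFun := fun y => WithLp.toLp 2 (fun i => if v i = 0 then ⟪u i, y⟫ else 0)
      map_add' := by
        intro y z; ext i
        show (if v i = 0 then ⟪u i, y + z⟫ else 0)
          = (if v i = 0 then ⟪u i, y⟫ else 0) + (if v i = 0 then ⟪u i, z⟫ else 0)
        by_cases h : v i = 0 <;> simp [h, inner_add_right]
      map_smul' := by
        intro r y; ext i
        show (if v i = 0 then ⟪u i, r • y⟫ else 0) = r * (if v i = 0 then ⟪u i, y⟫ else 0)
        by_cases h : v i = 0 <;> simp [h, inner_smul_right] }
  set a' : F := WithLp.toLp 2 (fun i => if v i = 0 then a i else 0 : Fin m → ℝ) with ha'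
  have ha'mem : a' ∉ LinearMap.range T := by
    rintro ⟨y, hy⟩
    apply h1
    refine ⟨y, fun i hi => ?_⟩
    have := congrArg (fun z => z i) hy
    simpa [T, ha', hi] using this
  have hK : ∃ g, g ∈ (LinearMap.range T)ᗮ ∧ ⟪g, a'⟫ ≠ 0 := by
    by_contra hg
    push_neg at hg
    apply ha'mem
    have : a' ∈ (LinearMap.range T)ᗮᗮ := by
      rw [Submodule.mem_orthogonal]
      intro z hz
      exact hg z hz
    rwa [Submodule.orthogonal_orthogonal] at this
  obtain ⟨g, hgorth, hga⟩ := hK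
  set c₀ : Fin m → ℝ := fun i => if v i = 0 then g i else 0 with hc₀
  have hker : ∑ i, c₀ i • u i = 0 := by
    have hz : ∀ z : Euc n, ⟪(∑ i, c₀ i • u i), z⟫ = 0 := by
      intro z
      rw [sum_inner]
      have : ∀ i ∈ Finset.univ, ⟪c₀ i • u i, z⟫ = (T z) i * g i := by
        intro i _
        rw [real_inner_smul_left]
        by_cases h : v i = 0 <;> simp [T, hc₀, h] <;> ring
      rw [Finset.sum_congr rfl this]
      have : ∑ i, (T z) i * g i = ⟪(T z : F), g⟫ := by
        rw [PiLp.inner_apply]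
        simp [RCLike.inner_apply, conj_trivial]
        exact Finset.sum_congr rfl fun _ _ => mul_comm _ _
      rw [this]
      exact (Submodule.mem_orthogonal _ g).1 hgorth (T z) (LinearMap.mem_range_self T z)
    exact inner_self_eq_zero.1 (hz _)
  have hr : dotm c₀ a = ⟪g, a'⟫ := by
    rw [dotm, PiLp.inner_apply]
    simp only [RCLike.inner_apply, conj_trivial]
    apply Finset.sum_congr rfl
    intro i _
    by_cases h : v i = 0 <;> simp [hc₀, ha', h] <;> ring
  have hprod : ∀ i, c₀ i * v i = 0 := by
    intro i
    by_cases h : v i = 0 <;> simp [hc₀, h]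
  rcases lt_or_gt_of_ne hga with hneg | hpos
  · refine ⟨-c₀, ?_, ?_, ?_⟩
    · have : ∑ i, (-c₀) i • u i = -∑ i, c₀ i • u i := by
        rw [← Finset.sum_neg_distrib]; apply Finset.sum_congr rfl; intro i _; simp
      rw [this, hker, neg_zero]
    · intro i; simp only [Pi.neg_apply, neg_mul]; rw [hprod i]; simp
    · have : dotm (-c₀) a = - dotm c₀ a := by
        rw [dotm, dotm, ← Finset.sum_neg_distrib]
        apply Finset.sum_congr rfl; intro i _; simp
      rw [this, hr]; linarith
  · refine ⟨c₀, hker, ?_, ?_⟩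
    · intro i; rw [hprod i]
    · rw [hr]; exact hpos

lemma convex_pos_comb {p q s t : ℝ} (hp : 0 < p) (hq : 0 < q) (hs : 0 ≤ s) (ht : 0 ≤ t)
    (hst : s + t = 1) : 0 < s * p + t * q := by
  rcases eq_or_lt_of_le hs with h | h
  · have htt : t = 1 := by linarith
    rw [← h, htt]; linarith
  · have h1 : 0 < s * p := mul_pos h hp
    have h2 : 0 ≤ t * q := mul_nonneg ht (le_of_lt hq)
    linarith

lemma cert_case2 (u : Fin m → Euc n) (a v : Fin m → ℝ)
    (h1 : ∃ y₀ : Euc n, ∀ i, v i = 0 → ⟪u i, y₀⟫ = a i)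
    (hno : ¬ ∃ y : Euc n, ∀ i, SignType.sign (v i) = SignType.sign (⟪u i, y⟫ - a i)) :
    ∃ d : Fin m → ℝ, (∑ i, d i • u i = 0) ∧ (∀ i, 0 ≤ d i * v i) ∧
      (0 < dotm d a ∨ (0 ≤ dotm d a ∧ ∃ i0, 0 < d i0 * v i0)) := by
  classical
  obtain ⟨y₀, hy₀⟩ := h1
  set O : Set (EuclideanSpace ℝ (Fin m)) := {z | ∀ i, v i ≠ 0 → 0 < v i * z i} with hO
  set L : Set (EuclideanSpace ℝ (Fin m)) :=
    {z | ∃ y : Euc n, (∀ i, v i = 0 → ⟪u i, y⟫ = a i) ∧ ∀ i, z i = ⟪u i, y⟫ - a i} with hL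
  have hOopen : IsOpen O := by
    have he : O = ⋂ i : Fin m, {z : EuclideanSpace ℝ (Fin m) | v i ≠ 0 → 0 < v i * z i} := by
      ext z; simp [hO, Set.mem_iInter]
    rw [he]
    apply isOpen_iInter_of_finite
    intro i
    by_cases h : v i = 0
    · have : {z : EuclideanSpace ℝ (Fin m) | v i ≠ 0 → 0 < v i * z i} = Set.univ := by
        ext z; simp [h]
      rw [this]; exact isOpen_univ
    · have : {z : EuclideanSpace ℝ (Fin m) | v i ≠ 0 → 0 < v i * z i}
          = {z : EuclideanSpace ℝ (Fin m) | 0 < v i * z i} := by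
        ext z; simp [h]
      rw [this]
      exact isOpen_lt continuous_const (continuous_const.mul (EuclideanSpace.proj i).continuous)
  have hOconv : Convex ℝ O := by
    intro z1 hz1 z2 hz2 s t hs ht hst
    intro i hv
    have e : (s • z1 + t • z2) i = s * z1 i + t * z2 i := rfl
    rw [e]
    have h1 := hz1 i hv
    have h2 := hz2 i hv
    have e2 : v i * (s * z1 i + t * z2 i) = s * (v i * z1 i) + t * (v i * z2 i) := by ring
    rw [e2]
    exact convex_pos_comb h1 h2 hs ht hst
  have hLconv : Convex ℝ L := by
    rintro z1 ⟨y1, hy1, hz1⟩ z2 ⟨y2, hy2, hz2⟩ s t hs ht hst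
    refine ⟨s • y1 + t • y2, ?_, ?_⟩
    · intro i hv
      rw [inner_add_right, real_inner_smul_right, real_inner_smul_right, hy1 i hv, hy2 i hv]
      linear_combination (a i) * hst
    · intro i
      have e : (s • z1 + t • z2) i = s * z1 i + t * z2 i := rfl
      rw [e, hz1 i, hz2 i, inner_add_right, real_inner_smul_right, real_inner_smul_right]
      linear_combination (- (a i)) * hst
  have hdisj : Disjoint O L := by
    rw [Set.disjoint_left]
    rintro z hzO ⟨y, hyeq, hz⟩
    apply hno
    refine ⟨y, fun i => ?_⟩
    by_cases h : v i = 0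
    · rw [h, hyeq i h, sub_self]
    · have := hzO i h
      rw [hz i] at this
      exact sign_eq_of_mul_pos this
  obtain ⟨f, u₀, hfO, hfL⟩ := geometric_hahn_banach_open hOconv hOopen hLconv hdisj
  set w := (InnerProductSpace.toDual ℝ (EuclideanSpace ℝ (Fin m))).symm f with hwdef
  have hw : ∀ z : EuclideanSpace ℝ (Fin m), f z = ∑ i, w i * z i := by
    intro z
    rw [← InnerProductSpace.toDual_symm_apply (𝕜 := ℝ) (y := f) (x := z)]
    rw [← hwdef, PiLp.inner_apply]
    simp [RCLike.inner_apply, conj_trivial]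
    exact Finset.sum_congr rfl fun _ _ => mul_comm _ _
  have hvmem : (WithLp.toLp 2 v : EuclideanSpace ℝ (Fin m)) ∈ O := by
    intro i hv
    exact mul_self_pos.2 hv
  have hOsmul : ∀ t : ℝ, 0 < t → ∀ z ∈ O, (t • z : EuclideanSpace ℝ (Fin m)) ∈ O := by
    intro t ht z hz i hv
    have e : (t • z : EuclideanSpace ℝ (Fin m)) i = t * z i := rfl
    rw [e]
    have := hz i hv
    nlinarith
  have hu₀ : 0 ≤ u₀ := by
    by_contra hneg
    push_neg at hneg
    rcases le_or_gt 0 (f (WithLp.toLp 2 v)) with h | h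
    · linarith [hfO (WithLp.toLp 2 v) hvmem]
    · have ht : 0 < u₀ / (2 * f (WithLp.toLp 2 v)) := div_pos_of_neg_of_neg hneg (by linarith)
      have hmem := hOsmul _ ht (WithLp.toLp 2 v) hvmem
      have hlt := hfO _ hmem
      rw [map_smul, smul_eq_mul] at hlt
      have hfv : f (WithLp.toLp 2 v) ≠ 0 := ne_of_lt h
      have heq : u₀ / (2 * f (WithLp.toLp 2 v)) * f (WithLp.toLp 2 v) = u₀ / 2 := by field_simp
      rw [heq] at hlt
      linarith
  have hfcone : ∀ z : EuclideanSpace ℝ (Fin m),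
      (∀ i, v i ≠ 0 → 0 ≤ v i * z i) → f z ≤ 0 := by
    intro z hz
    apply nonpos_of_forall_smul_lt (q := u₀ - f (WithLp.toLp 2 v))
    intro l hl
    have hmem : (l • z + (show EuclideanSpace ℝ (Fin m) from WithLp.toLp 2 v)) ∈ O := by
      intro i hv
      have e : (l • z + (show EuclideanSpace ℝ (Fin m) from WithLp.toLp 2 v)) i = l * z i + v i := rfl
      rw [e]
      have h1 := hz i hv
      have h2 := mul_self_pos.2 hv
      nlinarith
    have := hfO _ hmem
    rw [map_add, map_smul, smul_eq_mul] at this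
    linarith
  have hfsingle : ∀ (i : Fin m) (r : ℝ), f (EuclideanSpace.single i r) = w i * r := by
    intro i r
    rw [hw]
    rw [Finset.sum_eq_single i]
    · rw [EuclideanSpace.single_apply]; simp
    · intro j _ hj; rw [EuclideanSpace.single_apply]; simp [hj]
    · intro h; exact absurd (Finset.mem_univ i) h
  have hZzero : ∀ i, v i = 0 → w i = 0 := by
    intro i hv
    have h1 := hfcone (EuclideanSpace.single i 1) (fun j hj => by
      rw [EuclideanSpace.single_apply]
      rcases eq_or_ne j i with rfl | hne
      · exact absurd hv hj
      · simp [hne])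
    have h2 := hfcone (EuclideanSpace.single i (-1)) (fun j hj => by
      rw [EuclideanSpace.single_apply]
      rcases eq_or_ne j i with rfl | hne
      · exact absurd hv hj
      · simp [hne])
    rw [hfsingle] at h1 h2
    simp at h1 h2
    linarith
  have hcvle : ∀ i, v i ≠ 0 → w i * v i ≤ 0 := by
    intro i hv
    have h1 := hfcone (EuclideanSpace.single i (v i)) (fun j hj => by
      rw [EuclideanSpace.single_apply]
      rcases eq_or_ne j i with rfl | hne
      · simp [mul_self_nonneg]
      · simp [hne])
    rwa [hfsingle] at h1
  -- the vector ∑ w i • u i lies in the span of {u i : v i = 0}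
  set g : Fin m → Euc n := fun i => if v i = 0 then u i else 0 with hg
  set Wspan := Submodule.span ℝ (Set.range g) with hWspan
  set zw : Euc n := ∑ i, w i • u i with hzw
  set z₀ : EuclideanSpace ℝ (Fin m) := WithLp.toLp 2 (fun i => ⟪u i, y₀⟫ - a i : Fin m → ℝ) with hz₀
  have hz₀L : z₀ ∈ L := ⟨y₀, hy₀, fun i => rfl⟩
  have horthmem : zw ∈ Wspanᗮᗮ := by
    rw [Submodule.mem_orthogonal]
    intro p hp
    have hpu : ∀ i, v i = 0 → ⟪u i, p⟫ = 0 := by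
      intro i hv
      have hgi : g i ∈ Wspan := Submodule.subset_span ⟨i, rfl⟩
      have := (Submodule.mem_orthogonal _ p).1 hp (g i) hgi
      rw [hg] at this
      simp only [hv, if_true] at this
      exact this
    have hB : ∀ t : ℝ, u₀ ≤ f z₀ + t * ⟪zw, p⟫ := by
      intro t
      set zt : EuclideanSpace ℝ (Fin m) :=
        WithLp.toLp 2 (fun i => ⟪u i, y₀ + t • p⟫ - a i : Fin m → ℝ) with hzt
      have hztL : zt ∈ L := by
        refine ⟨y₀ + t • p, fun i hv => ?_, fun i => rfl⟩
        rw [inner_add_right, real_inner_smul_right, hy₀ i hv, hpu i hv]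
        ring
      have hle := hfL zt hztL
      have hfzt : f zt = f z₀ + t * ⟪zw, p⟫ := by
        rw [hw, hw]
        have hinner : ⟪zw, p⟫ = ∑ i, w i * ⟪u i, p⟫ := by
          rw [hzw, sum_inner]
          apply Finset.sum_congr rfl
          intro i _
          rw [real_inner_smul_left]
        rw [hinner, Finset.mul_sum, ← Finset.sum_add_distrib]
        apply Finset.sum_congr rfl
        intro i _
        have e1 : zt i = ⟪u i, y₀⟫ + t * ⟪u i, p⟫ - a i := by
          rw [hzt]
          show ⟪u i, y₀ + t • p⟫ - a i = _
          rw [inner_add_right, real_inner_smul_right]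
        have e2 : z₀ i = ⟪u i, y₀⟫ - a i := rfl
        rw [e1, e2]
        ring
      rw [hfzt] at hle
      exact hle
    have := eq_zero_of_forall_le_affine hB
    rw [real_inner_comm]
    exact this
  have hzwspan : zw ∈ Wspan := by
    rwa [Submodule.orthogonal_orthogonal] at horthmem
  obtain ⟨γ, hγ⟩ := (Submodule.mem_span_range_iff_exists_fun ℝ).1 hzwspan
  set d : Fin m → ℝ := fun i => -(w i) + (if v i = 0 then γ i else 0) with hd
  have hdker : ∑ i, d i • u i = 0 := by
    have e : ∀ i ∈ Finset.univ, d i • u i = -(w i • u i) + γ i • g i := by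
      intro i _
      rw [hd]
      show (-(w i) + (if v i = 0 then γ i else 0)) • u i = _
      rw [hg]
      by_cases h : v i = 0 <;> simp [h, add_smul, neg_smul]
    rw [Finset.sum_congr rfl e, Finset.sum_add_distrib, Finset.sum_neg_distrib, ← hzw, hγ]
    simp
  have hdv : ∀ i, 0 ≤ d i * v i := by
    intro i
    by_cases h : v i = 0
    · rw [h, mul_zero]
    · have : d i = -(w i) := by rw [hd]; simp [h]
      rw [this]
      have := hcvle i h
      nlinarith
  have hda : dotm d a = f z₀ := by
    have hdy₀ : ∑ i, d i * ⟪u i, y₀⟫ = 0 := by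
      have h0 : ⟪(∑ i, d i • u i), y₀⟫ = 0 := by rw [hdker, inner_zero_left]
      rw [sum_inner] at h0
      rw [← h0]
      apply Finset.sum_congr rfl
      intro i _
      rw [real_inner_smul_left]
    rw [hw]
    have e : ∀ i ∈ Finset.univ, w i * z₀ i = d i * a i - d i * ⟪u i, y₀⟫ := by
      intro i _
      have e2 : z₀ i = ⟪u i, y₀⟫ - a i := rfl
      rw [e2, hd]
      by_cases h : v i = 0
      · rw [hy₀ i h]
        simp only [h, if_true]
        ring
      · simp only [h, if_false]
        ring
    rw [Finset.sum_congr rfl e, Finset.sum_sub_distrib, hdy₀, sub_zero, dotm]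
  have hfa : u₀ ≤ dotm d a := by
    rw [hda]
    exact hfL z₀ hz₀L
  refine ⟨d, hdker, hdv, ?_⟩
  rcases lt_or_eq_of_le hu₀ with hpos | hzero
  · left; linarith
  · right
    refine ⟨by linarith, ?_⟩
    have hfv : f (WithLp.toLp 2 v) < 0 := by
      have := hfO (WithLp.toLp 2 v) hvmem
      rw [← hzero] at this
      exact this
    have hsum : ∑ i, d i * v i = - f (WithLp.toLp 2 v) := by
      rw [hw]
      rw [← Finset.sum_neg_distrib]
      apply Finset.sum_congr rfl
      intro i _
      by_cases h : v i = 0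
      · show _ = -(w i * v i); rw [h]; ring
      · have : d i = -(w i) := by rw [hd]; simp [h]
        rw [this]; ring
    by_contra hall
    push_neg at hall
    have := Finset.sum_nonpos (fun i (_ : i ∈ Finset.univ) => hall i)
    rw [hsum] at this
    linarith

lemma subset_of_same {n m : ℕ} {u : Fin m → Euc n} {a b : Fin m → ℝ}
    (hsame : ∀ d, IsCircuitVector u d →
      SignType.sign (dotm d b) = SignType.sign (dotm d a)) :
    signSet u b ⊆ signSet u a := by
  classical
  rintro s ⟨x, hx⟩
  by_contra hno
  set v : Fin m → ℝ := fun i => ⟪u i, x⟫ - b i with hv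
  have hxv : ∀ i, v i = ⟪u i, x⟫ - b i := fun i => rfl
  have hno' : ¬ ∃ y : Euc n, ∀ i,
      SignType.sign (v i) = SignType.sign (⟪u i, y⟫ - a i) := by
    rintro ⟨y, hy⟩
    exact hno ⟨y, fun i => by rw [hx i]; exact hy i⟩
  obtain ⟨d, hdker, hdv, hcase⟩ :
      ∃ d : Fin m → ℝ, (∑ i, d i • u i = 0) ∧ (∀ i, 0 ≤ d i * v i) ∧
        (0 < dotm d a ∨ (0 ≤ dotm d a ∧ ∃ i0, 0 < d i0 * v i0)) := by
    by_cases h1 : ∃ y₀ : Euc n, ∀ i, v i = 0 → ⟪u i, y₀⟫ = a i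
    · exact cert_case2 u a v h1 hno'
    · obtain ⟨d, h2, h3, h4⟩ := cert_case1 u a v h1
      exact ⟨d, h2, h3, Or.inl h4⟩
  have hB := lemB hxv hsame (Finset.univ.filter (fun i => d i ≠ 0)).card d le_rfl
    hdker hdv
  rcases hcase with h | ⟨h0, i0, hi0⟩
  · linarith [hB.1]
  · have hd0 : d i0 ≠ 0 := by intro h; rw [h] at hi0; simp at hi0
    have hv0 : v i0 ≠ 0 := by intro h; rw [h] at hi0; simp at hi0
    linarith [hB.2 i0 hd0 hv0]

end Helpers

open Helpers in
theorem faceOp_signOp_eq_iff_openFace {n m : ℕ} (hn : 1 ≤ n) (hm : 1 ≤ m)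
    (u : Fin m → Euc n) (hu : ∀ i, u i ≠ 0)
    (S : Set (Fin m → ℝ)) (hS : S.Nonempty) :
    FaceOp u (SignOp u S) = S ↔
      ∃ a : Fin m → ℝ, S = {b | SameOpenFace u b a} := by
  have hmem : ∀ x, x ∈ FaceOp u (SignOp u S) ↔ ∀ b ∈ S, signSet u b ⊆ signSet u x := by
    intro x
    constructor
    · intro hx b hb
      exact fun s hs => hx (Set.mem_biUnion hb hs)
    · intro hx
      intro s hs
      rw [SignOp, Set.mem_iUnion₂] at hs
      obtain ⟨b, hb, hsb⟩ := hs
      exact hx b hb hsb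
  constructor
  · intro hface
    obtain ⟨a, ha⟩ := hS
    have hsame_all : ∀ b ∈ S, SameOpenFace u b a := by
      intro b hb
      have hb' : b ∈ FaceOp u (SignOp u S) := by rw [hface]; exact hb
      have hsub : signSet u a ⊆ signSet u b := (hmem b).1 hb' a ha
      intro c hc
      exact (same_of_subset hsub hc).symm
    refine ⟨a, ?_⟩
    ext b
    constructor
    · intro hb
      exact hsame_all b hb
    · intro hb
      rw [← hface]
      apply (hmem b).2
      intro b' hb'
      apply subset_of_same
      intro c hc
      exact (hsame_all b' hb' c hc).trans ((hb : SameOpenFace u b a) c hc).symm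
  · rintro ⟨a, rfl⟩
    ext x
    rw [hmem x]
    constructor
    · intro h
      have haa : a ∈ {b | SameOpenFace u b a} := fun c _ => rfl
      have h2 := h a haa
      intro c hc
      exact (same_of_subset h2 hc).symm
    · intro hx b hb
      apply subset_of_same
      intro c hc
      exact ((hb : SameOpenFace u b a) c hc).trans ((hx : SameOpenFace u x a) c hc).symm
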